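/- For each p ∈ [1, ∞], the network Gromov–Wasserstein function d_{N,p}(X,Y) := (1/2) min over couplings μ ∈ C(μ_X, μ_Y) of dis_p(μ) is a pseudometric on the collection of measure networks: it is nonnegative, vanishes on identical networks, symmetric, and satisfies the triangle inequality d_{N,p}(X,Z) ≤ d_{N,p}(X,Y) + d_{N,p}(Y,Z). -/

import Mathlib

open MeasureTheory ENNReal

/-- The set of couplings between two measures: probability-type measures on the product
with the prescribed marginals. -/
def Coupling {X Y : Type*} [MeasurableSpace X] [MeasurableSpace Y]
    (μX : Measure X) (μY : Measure Y) : Set (Measure (X × Y)) :=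
  {μ | μ.fst = μX ∧ μ.snd = μY}

/-- The `p`-distortion of a coupling `μ` between two measure networks, namely
`‖ω_X - ω_Y‖_{L^p(μ ⊗ μ)}` (for `p = ∞` this is the essential supremum). -/
noncomputable def dis {X Y : Type*} [MeasurableSpace X] [MeasurableSpace Y]
    (ωX : X × X → ℝ) (ωY : Y × Y → ℝ) (p : ℝ≥0∞) (μ : Measure (X × Y)) : ℝ≥0∞ :=
  eLpNorm (fun q : (X × Y) × (X × Y) => ωX (q.1.1, q.2.1) - ωY (q.1.2, q.2.2)) p (μ.prod μ)

/-- The network Gromov–Wasserstein distance: half the infimal `p`-distortion over couplings. -/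
noncomputable def dN {X Y : Type*} [MeasurableSpace X] [MeasurableSpace Y]
    (ωX : X × X → ℝ) (ωY : Y × Y → ℝ) (p : ℝ≥0∞) (μX : Measure X) (μY : Measure Y) : ℝ≥0∞ :=
  (1 / 2) * ⨅ μ ∈ Coupling μX μY, dis ωX ωY p μ

section Aux
open ProbabilityTheory

variable {X Y Z A : Type*} [MeasurableSpace X] [MeasurableSpace Y] [MeasurableSpace Z]
  [MeasurableSpace A]

/-- Measurability of the distortion integrand. -/
lemma measurable_disFun (ωX : X × X → ℝ) (ωY : Y × Y → ℝ)
    (hωX : Measurable ωX) (hωY : Measurable ωY) :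
    Measurable (fun q : (X × Y) × (X × Y) => ωX (q.1.1, q.2.1) - ωY (q.1.2, q.2.2)) :=
  (hωX.comp (measurable_fst.fst.prodMk measurable_snd.fst)).sub
    (hωY.comp (measurable_fst.snd.prodMk measurable_snd.snd))

/-- `dis` of a pushforward measure. -/
lemma dis_map (ωX : X × X → ℝ) (ωY : Y × Y → ℝ)
    (hωX : Measurable ωX) (hωY : Measurable ωY) (p : ℝ≥0∞)
    (m : Measure A) [SFinite m] (g : A → X × Y) (hg : Measurable g) :
    dis ωX ωY p (m.map g) =
      eLpNorm (fun q : A × A => ωX ((g q.1).1, (g q.2).1) - ωY ((g q.1).2, (g q.2).2)) p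
        (m.prod m) := by
  unfold dis
  rw [Measure.map_prod_map _ _ hg hg,
    eLpNorm_map_measure ((measurable_disFun ωX ωY hωX hωY).aestronglyMeasurable)
      ((hg.prodMap hg).aemeasurable)]
  rfl

lemma isProbabilityMeasure_of_fst {μ : Measure (X × Y)} {ν : Measure X}
    [IsProbabilityMeasure ν] (h : μ.fst = ν) : IsProbabilityMeasure μ :=
  ⟨by rw [← Set.preimage_univ (f := @Prod.fst X Y), ← Measure.fst_apply MeasurableSet.univ, h,
    measure_univ]⟩

/-- Symmetry via swapping couplings. -/
lemma iInf_dis_swap_le {μW : Measure X} {μV : Measure Y}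
    [IsProbabilityMeasure μW] [IsProbabilityMeasure μV]
    (ωW : X × X → ℝ) (ωV : Y × Y → ℝ) (hωW : Measurable ωW) (hωV : Measurable ωV) (p : ℝ≥0∞) :
    (⨅ μ ∈ Coupling μV μW, dis ωV ωW p μ) ≤ ⨅ μ ∈ Coupling μW μV, dis ωW ωV p μ := by
  refine le_iInf₂ fun μ hμ => ?_
  haveI : IsProbabilityMeasure μ := isProbabilityMeasure_of_fst hμ.1
  have hswap : μ.map Prod.swap ∈ Coupling μV μW := by
    constructor
    · rw [Measure.fst, Measure.map_map measurable_fst measurable_swap]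
      exact hμ.2
    · rw [Measure.snd, Measure.map_map measurable_snd measurable_swap]
      exact hμ.1
  refine le_trans (iInf₂_le _ hswap) (le_of_eq ?_)
  rw [dis_map ωV ωW hωV hωW p μ _ measurable_swap]
  have : (fun q : (X × Y) × (X × Y) => ωV ((Prod.swap q.1).1, (Prod.swap q.2).1) -
      ωW ((Prod.swap q.1).2, (Prod.swap q.2).2)) =
      -(fun q : (X × Y) × (X × Y) => ωW (q.1.1, q.2.1) - ωV (q.1.2, q.2.2)) := by
    funext q; simp [Prod.swap]
  rw [this, eLpNorm_neg]
  rfl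

end Aux

open ProbabilityTheory

/-- Gluing lemma: two couplings sharing a marginal can be glued. -/
lemma glue {X Y Z : Type*} [MeasurableSpace X]
    [TopologicalSpace Y] [PolishSpace Y] [MeasurableSpace Y] [BorelSpace Y]
    [TopologicalSpace Z] [PolishSpace Z] [MeasurableSpace Z] [BorelSpace Z]
    {μX : Measure X} {μY : Measure Y} {μZ : Measure Z}
    [IsProbabilityMeasure μX] [IsProbabilityMeasure μY] [IsProbabilityMeasure μZ]
    {A : Measure (X × Y)} {B : Measure (Y × Z)}
    (hA : A ∈ Coupling μX μY) (hB : B ∈ Coupling μY μZ) :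
    ∃ m : Measure ((X × Y) × Z), IsProbabilityMeasure m ∧
      m.map Prod.fst = A ∧ m.map (fun q => (q.1.2, q.2)) = B := by
  haveI : IsProbabilityMeasure A := isProbabilityMeasure_of_fst hA.1
  haveI : IsProbabilityMeasure B := isProbabilityMeasure_of_fst hB.1
  haveI : Nonempty Z := Measure.nonempty_of_neZero μZ
  set κ : Kernel Y Z := B.condKernel with hκ
  set κ' : Kernel (X × Y) Z := κ.comap Prod.snd measurable_snd with hκ'
  refine ⟨A ⊗ₘ κ', inferInstance, ?_, ?_⟩
  · rw [show (A ⊗ₘ κ').map Prod.fst = (A ⊗ₘ κ').fst from rfl, Measure.fst_compProd]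
  · ext s hs
    rw [Measure.map_apply (measurable_fst.snd.prodMk measurable_snd) hs,
      Measure.compProd_apply (((measurable_fst.snd.prodMk measurable_snd)) hs)]
    have h1 : ∀ a : X × Y, κ' a (Prod.mk a ⁻¹' ((fun q : (X × Y) × Z => (q.1.2, q.2)) ⁻¹' s))
        = κ a.2 (Prod.mk a.2 ⁻¹' s) := by
      intro a
      rw [hκ', Kernel.comap_apply]
      rfl
    simp_rw [h1]
    have h2 : ∫⁻ a : X × Y, κ a.2 (Prod.mk a.2 ⁻¹' s) ∂A
        = ∫⁻ y, κ y (Prod.mk y ⁻¹' s) ∂(A.snd) := by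
      rw [Measure.snd, lintegral_map (Kernel.measurable_kernel_prodMk_left hs) measurable_snd]
    rw [h2, hA.2, ← hB.1]
    conv_rhs => rw [← B.disintegrate B.condKernel]
    rw [Measure.compProd_apply hs, hB.1]

/-- Key inequality: the infimal distortion between `X` and `Z` is bounded by the sum of
distortions of couplings `A` (between `X,Y`) and `B` (between `Y,Z`). -/
lemma iInf_dis_le {X Y Z : Type*}
    [TopologicalSpace X] [PolishSpace X] [MeasurableSpace X] [BorelSpace X]
    [TopologicalSpace Y] [PolishSpace Y] [MeasurableSpace Y] [BorelSpace Y]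
    [TopologicalSpace Z] [PolishSpace Z] [MeasurableSpace Z] [BorelSpace Z]
    {μX : Measure X} {μY : Measure Y} {μZ : Measure Z}
    [IsProbabilityMeasure μX] [IsProbabilityMeasure μY] [IsProbabilityMeasure μZ]
    (ωX : X × X → ℝ) (ωY : Y × Y → ℝ) (ωZ : Z × Z → ℝ)
    (hωX : Measurable ωX) (hωY : Measurable ωY) (hωZ : Measurable ωZ)
    (p : ℝ≥0∞) (hp : 1 ≤ p)
    {A : Measure (X × Y)} {B : Measure (Y × Z)}
    (hA : A ∈ Coupling μX μY) (hB : B ∈ Coupling μY μZ) :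
    (⨅ μ ∈ Coupling μX μZ, dis ωX ωZ p μ) ≤ dis ωX ωY p A + dis ωY ωZ p B := by
  obtain ⟨m, hm, hmA, hmB⟩ := glue hA hB
  set ν : Measure (X × Z) := m.map (fun q => (q.1.1, q.2)) with hν
  have hg : Measurable (fun q : (X × Y) × Z => (q.1.1, q.2)) :=
    measurable_fst.fst.prodMk measurable_snd
  have hνC : ν ∈ Coupling μX μZ := by
    constructor
    · rw [hν, Measure.fst, Measure.map_map measurable_fst hg]
      have : (Prod.fst ∘ fun q : (X × Y) × Z => (q.1.1, q.2)) =
          (Prod.fst ∘ (Prod.fst : (X × Y) × Z → X × Y)) := rfl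
      rw [this, ← Measure.map_map measurable_fst measurable_fst, hmA, ← Measure.fst, hA.1]
    · rw [hν, Measure.snd, Measure.map_map measurable_snd hg]
      have : (Prod.snd ∘ fun q : (X × Y) × Z => (q.1.1, q.2)) =
          (Prod.snd ∘ fun q : (X × Y) × Z => (q.1.2, q.2)) := rfl
      rw [this, ← Measure.map_map measurable_snd (measurable_fst.snd.prodMk measurable_snd),
        hmB, ← Measure.snd, hB.2]
  refine le_trans (iInf₂_le ν hνC) ?_
  -- express everything over `m.prod m`
  have hdν : dis ωX ωZ p ν =
      eLpNorm (fun q : ((X × Y) × Z) × ((X × Y) × Z) =>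
        ωX (q.1.1.1, q.2.1.1) - ωZ (q.1.2, q.2.2)) p (m.prod m) :=
    dis_map ωX ωZ hωX hωZ p m _ hg
  have hdA : dis ωX ωY p A =
      eLpNorm (fun q : ((X × Y) × Z) × ((X × Y) × Z) =>
        ωX (q.1.1.1, q.2.1.1) - ωY (q.1.1.2, q.2.1.2)) p (m.prod m) := by
    rw [← hmA]; exact dis_map ωX ωY hωX hωY p m _ measurable_fst
  have hdB : dis ωY ωZ p B =
      eLpNorm (fun q : ((X × Y) × Z) × ((X × Y) × Z) =>
        ωY (q.1.1.2, q.2.1.2) - ωZ (q.1.2, q.2.2)) p (m.prod m) := by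
    rw [← hmB]
    exact dis_map ωY ωZ hωY hωZ p m _ (measurable_fst.snd.prodMk measurable_snd)
  rw [hdν, hdA, hdB]
  have heq : (fun q : ((X × Y) × Z) × ((X × Y) × Z) =>
      ωX (q.1.1.1, q.2.1.1) - ωZ (q.1.2, q.2.2)) =
      (fun q => ωX (q.1.1.1, q.2.1.1) - ωY (q.1.1.2, q.2.1.2)) +
      (fun q => ωY (q.1.1.2, q.2.1.2) - ωZ (q.1.2, q.2.2)) := by
    funext q; simp only [Pi.add_apply]; ring
  rw [heq]
  refine eLpNorm_add_le ?_ ?_ hp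
  · exact ((hωX.comp (measurable_fst.fst.fst.prodMk measurable_snd.fst.fst)).sub
      (hωY.comp (measurable_fst.fst.snd.prodMk measurable_snd.fst.snd))).aestronglyMeasurable
  · exact ((hωY.comp (measurable_fst.fst.snd.prodMk measurable_snd.fst.snd)).sub
      (hωZ.comp (measurable_fst.snd.prodMk measurable_snd.snd))).aestronglyMeasurable

/-- **The network Gromov–Wasserstein function is a pseudometric**: it is nonnegative,
vanishes on identical networks, is symmetric, and satisfies the triangle inequality. -/
theorem dN_pseudometric
    {X Y Z : Type*} [TopologicalSpace X] [PolishSpace X] [MeasurableSpace X] [BorelSpace X]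
    [TopologicalSpace Y] [PolishSpace Y] [MeasurableSpace Y] [BorelSpace Y]
    [TopologicalSpace Z] [PolishSpace Z] [MeasurableSpace Z] [BorelSpace Z]
    (μX : Measure X) (μY : Measure Y) (μZ : Measure Z)
    [IsProbabilityMeasure μX] [IsProbabilityMeasure μY] [IsProbabilityMeasure μZ]
    (ωX : X × X → ℝ) (ωY : Y × Y → ℝ) (ωZ : Z × Z → ℝ)
    (hωX : Measurable ωX) (hωY : Measurable ωY) (hωZ : Measurable ωZ)
    (hbX : ∃ M, ∀ q, |ωX q| ≤ M) (hbY : ∃ M, ∀ q, |ωY q| ≤ M) (hbZ : ∃ M, ∀ q, |ωZ q| ≤ M)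
    (p : ℝ≥0∞) (hp : 1 ≤ p) :
    0 ≤ dN ωX ωY p μX μY ∧
    dN ωX ωX p μX μX = 0 ∧
    dN ωX ωY p μX μY = dN ωY ωX p μY μX ∧
    dN ωX ωZ p μX μZ ≤ dN ωX ωY p μX μY + dN ωY ωZ p μY μZ := by
  refine ⟨zero_le, ?_, ?_, ?_⟩
  · -- identical networks: diagonal coupling has zero distortion
    have hdiag : Measurable (fun x : X => (x, x)) := measurable_id.prodMk measurable_id
    have hC : μX.map (fun x => (x, x)) ∈ Coupling μX μX := by
      constructor
      · rw [Measure.fst, Measure.map_map measurable_fst hdiag]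
        simp [Function.comp_def]
      · rw [Measure.snd, Measure.map_map measurable_snd hdiag]
        simp [Function.comp_def]
    have h0 : dis ωX ωX p (μX.map (fun x => (x, x))) = 0 := by
      rw [dis_map ωX ωX hωX hωX p μX _ hdiag]
      simp
    refine le_antisymm ?_ zero_le
    rw [dN]
    calc (1 / 2 : ℝ≥0∞) * ⨅ μ ∈ Coupling μX μX, dis ωX ωX p μ
        ≤ (1 / 2) * dis ωX ωX p (μX.map (fun x => (x, x))) :=
          mul_le_mul_right (iInf₂_le _ hC) _
      _ = 0 := by rw [h0, mul_zero]
  · -- symmetry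
    have h1 : (⨅ μ ∈ Coupling μX μY, dis ωX ωY p μ) ≤ ⨅ μ ∈ Coupling μY μX, dis ωY ωX p μ :=
      iInf_dis_swap_le ωY ωX hωY hωX p
    have h2 : (⨅ μ ∈ Coupling μY μX, dis ωY ωX p μ) ≤ ⨅ μ ∈ Coupling μX μY, dis ωX ωY p μ :=
      iInf_dis_swap_le ωX ωY hωX hωY p
    unfold dN
    rw [le_antisymm h1 h2]
  · -- triangle inequality
    have h : (⨅ μ ∈ Coupling μX μZ, dis ωX ωZ p μ) ≤
        (⨅ μ ∈ Coupling μX μY, dis ωX ωY p μ) + ⨅ μ ∈ Coupling μY μZ, dis ωY ωZ p μ := by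
      simp_rw [ENNReal.iInf_add, ENNReal.add_iInf]
      refine le_iInf fun A => le_iInf fun hA => le_iInf fun B => le_iInf fun hB => ?_
      haveI : IsProbabilityMeasure A := isProbabilityMeasure_of_fst hA.1
      haveI : IsProbabilityMeasure B := isProbabilityMeasure_of_fst hB.1
      exact iInf_dis_le ωX ωY ωZ hωX hωY hωZ p hp hA hB
    calc dN ωX ωZ p μX μZ ≤ (1 / 2) *
        ((⨅ μ ∈ Coupling μX μY, dis ωX ωY p μ) + ⨅ μ ∈ Coupling μY μZ, dis ωY ωZ p μ) :=
          mul_le_mul_right h _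
      _ = dN ωX ωY p μX μY + dN ωY ωZ p μY μZ := by rw [mul_add]; rfl
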